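/- Let d = 1, R an odd integer with |R| ≥ 3, a ∈ ℝ \ {0}, B = {0, a}, and μ the probability measure satisfying μ = (1/2)(μ∘σ_0^{-1} + μ∘σ_a^{-1}) with σ_b(x) = x/R + b. Then L²(μ) has no orthonormal basis of exponentials: there is no set Λ ⊂ ℝ such that {e^{2πiλx} : λ ∈ Λ} is an orthonormal basis of L²(μ). -/

import Mathlib

open MeasureTheory Real ENNReal

noncomputable section

/-- `{e^{2πiλx} : λ ∈ Λ}` is an orthonormal basis of `L²(μ)`:
the exponentials are orthonormal and their orthogonal complement is trivial. -/
def IsExpONB (μ : Measure ℝ) (Λ : Set ℝ) : Prop :=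
  (∀ lam ∈ Λ, ∀ lam' ∈ Λ,
    ∫ x, (starRingEnd ℂ) (Complex.exp (2 * π * Complex.I * lam * x)) *
      Complex.exp (2 * π * Complex.I * lam' * x) ∂μ
      = if lam = lam' then 1 else 0) ∧
  (∀ g : Lp ℂ 2 μ,
    (∀ lam ∈ Λ,
      ∫ x, (starRingEnd ℂ) (Complex.exp (2 * π * Complex.I * lam * x)) *
        (g : ℝ → ℂ) x ∂μ = 0) → g = 0)

namespace NoExpAux

/-- The exponential kernel. -/
def E (t x : ℝ) : ℂ := Complex.exp (2 * π * Complex.I * t * x)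

lemma E_norm (t x : ℝ) : ‖E t x‖ = 1 := by
  have h : (2 * (π:ℂ) * Complex.I * t * x) = ((2 * π * t * x : ℝ) : ℂ) * Complex.I := by
    push_cast; ring
  rw [E, h, Complex.norm_exp_ofReal_mul_I]

lemma E_conj (t x : ℝ) : (starRingEnd ℂ) (E t x) = E (-t) x := by
  rw [E, E, ← Complex.exp_conj]
  congr 1
  simp only [map_mul, Complex.conj_I, Complex.conj_ofReal, map_ofNat]
  push_cast
  ring

lemma E_mul_conj (t t' x : ℝ) : (starRingEnd ℂ) (E t x) * E t' x = E (t' - t) x := by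
  rw [E_conj, E, E, ← Complex.exp_add]
  congr 1
  push_cast
  ring

lemma E_cont_t (x : ℝ) : Continuous fun t : ℝ => E t x :=
  Complex.continuous_exp.comp
    (((continuous_const.mul Complex.continuous_ofReal).mul continuous_const))

lemma E_cont_x (t : ℝ) : Continuous fun x : ℝ => E t x :=
  Complex.continuous_exp.comp (continuous_const.mul Complex.continuous_ofReal)

lemma E_int (μ : Measure ℝ) [IsProbabilityMeasure μ] (t : ℝ) : Integrable (E t) μ := by
  refine (integrable_const (1:ℝ)).mono' (E_cont_x t).aestronglyMeasurable ?_
  exact ae_of_all _ fun x => by rw [E_norm]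

/-- The Fourier transform of `μ` (at `t`, with the `2π` convention). -/
def F (μ : Measure ℝ) (t : ℝ) : ℂ := ∫ x, E t x ∂μ

lemma F_zero (μ : Measure ℝ) [IsProbabilityMeasure μ] : F μ 0 = 1 := by
  have h : ∀ x : ℝ, E 0 x = 1 := fun x => by simp [E]
  simp [F, h]

lemma norm_F_le (μ : Measure ℝ) [IsProbabilityMeasure μ] (t : ℝ) : ‖F μ t‖ ≤ 1 := by
  calc ‖F μ t‖ ≤ ∫ x, ‖E t x‖ ∂μ := norm_integral_le_integral_norm _
    _ = ∫ _x, (1:ℝ) ∂μ := by simp_rw [E_norm]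
    _ = 1 := by simp

lemma F_neg (μ : Measure ℝ) (s : ℝ) : F μ (-s) = (starRingEnd ℂ) (F μ s) := by
  rw [F, F, ← integral_conj]
  exact integral_congr_ae (Filter.EventuallyEq.of_eq (funext fun x => (E_conj s x).symm))

/-- The mask polynomial. -/
def cf (a t : ℝ) : ℂ := (1 + Complex.exp (2 * π * Complex.I * a * t)) / 2

end NoExpAux

end

noncomputable section

open NoExpAux Filter

variable {R : ℤ} {a : ℝ} {μ : Measure ℝ}

lemma F_self (hR : 3 ≤ |R|) (μ : Measure ℝ) [IsProbabilityMeasure μ]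
    (hμ : μ = (1/2 : ℝ≥0∞) • (μ.map (fun x => x / (R : ℝ)) +
      μ.map (fun x => x / (R : ℝ) + a))) (t : ℝ) :
    F μ t = cf a t * F μ (t / R) := by
  have hRz : (R : ℝ) ≠ 0 := by
    simp only [ne_eq, Int.cast_eq_zero]
    intro h; rw [h] at hR; norm_num at hR
  have m0 : Measurable fun x : ℝ => x / (R : ℝ) := measurable_id.div_const _
  have m1 : Measurable fun x : ℝ => x / (R : ℝ) + a := m0.add_const a
  haveI i0 : IsProbabilityMeasure (μ.map (fun x : ℝ => x / (R : ℝ))) :=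
    Measure.isProbabilityMeasure_map m0.aemeasurable
  haveI i1 : IsProbabilityMeasure (μ.map (fun x : ℝ => x / (R : ℝ) + a)) :=
    Measure.isProbabilityMeasure_map m1.aemeasurable
  have key : F μ t = ∫ x, E t x ∂((1/2 : ℝ≥0∞) • (μ.map (fun x => x / (R : ℝ)) +
      μ.map (fun x => x / (R : ℝ) + a))) := by rw [F, ← hμ]
  rw [key, integral_smul_measure,
    integral_add_measure (E_int _ t) (E_int _ t),
    integral_map m0.aemeasurable (E_cont_x t).aestronglyMeasurable,
    integral_map m1.aemeasurable (E_cont_x t).aestronglyMeasurable]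
  have e0 : ∀ x : ℝ, E t (x / R) = E (t / R) x := by
    intro x; rw [E, E]; congr 1; push_cast; ring
  have e1 : ∀ x : ℝ, E t (x / R + a) =
      Complex.exp (2 * π * Complex.I * a * t) * E (t / R) x := by
    intro x; rw [E, E, ← Complex.exp_add]; congr 1; push_cast; ring
  simp_rw [e0, e1, integral_const_mul]
  have h2 : ((1:ℝ≥0∞)/2).toReal = (1:ℝ)/2 := by simp
  rw [h2, Complex.real_smul, cf, ← F]
  push_cast
  ring

lemma cf_eq_zero (ha : a ≠ 0) {s : ℝ} {m : ℤ} (hm : Odd m) (h : 2 * a * s = m) :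
    cf a s = 0 := by
  have hex : Complex.exp (2 * π * Complex.I * a * s) = -1 := by
    have h' : (2 * (a:ℂ) * s) = (m : ℂ) := by exact_mod_cast h
    obtain ⟨k, hk⟩ := hm
    have : (2 * (π:ℂ) * Complex.I * a * s) = (k:ℂ) * (2 * π * Complex.I) + π * Complex.I := by
      have : (2 * (π:ℂ) * Complex.I * a * s) = (2 * (a:ℂ) * s) * (π * Complex.I) := by ring
      rw [this, h', hk]; push_cast; ring
    rw [this, Complex.exp_add, Complex.exp_int_mul_two_pi_mul_I, Complex.exp_pi_mul_I, one_mul]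
  rw [cf, hex]
  norm_num

lemma cf_zero_imp (ha : a ≠ 0) {s : ℝ} (h : cf a s = 0) :
    ∃ m : ℤ, Odd m ∧ 2 * a * s = m := by
  rw [cf] at h
  have h1 : (1 : ℂ) + Complex.exp (2 * π * Complex.I * a * s) = 0 := by
    field_simp at h
    linear_combination h
  have hex : Complex.exp (2 * π * Complex.I * a * s) = -1 := by linear_combination h1
  have h2 : Complex.exp (2 * π * Complex.I * a * s - π * Complex.I) = 1 := by
    rw [Complex.exp_sub, hex, Complex.exp_pi_mul_I]
    norm_num
  obtain ⟨n, hn⟩ := Complex.exp_eq_one_iff.mp h2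
  refine ⟨2 * n + 1, odd_two_mul_add_one n, ?_⟩
  have hπ : ((π:ℂ)) * Complex.I ≠ 0 :=
    mul_ne_zero (Complex.ofReal_ne_zero.mpr Real.pi_ne_zero) Complex.I_ne_zero
  have h3 : (((2 * a * s : ℝ) : ℂ) - ((2 * n + 1 : ℤ) : ℂ)) * ((π:ℂ) * Complex.I) = 0 := by
    push_cast
    push_cast at hn
    linear_combination hn
  rcases mul_eq_zero.mp h3 with h4 | h4
  · have h5 : ((2 * a * s : ℝ) : ℂ) = ((2 * n + 1 : ℤ) : ℂ) := by linear_combination h4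
    exact_mod_cast h5
  · exact absurd h4 hπ

lemma norm_exp_I (θ : ℝ) : ‖Complex.exp ((θ:ℂ) * Complex.I)‖ = 1 :=
  Complex.norm_exp_ofReal_mul_I θ

lemma norm_cf_le (a s : ℝ) : ‖cf a s‖ ≤ 1 := by
  have h : (2 * (π:ℂ) * Complex.I * a * s) = ((2 * π * a * s : ℝ) : ℂ) * Complex.I := by
    push_cast; ring
  rw [cf, h]
  rw [norm_div]
  have h1 : ‖(1 : ℂ) + Complex.exp (((2 * π * a * s : ℝ) : ℂ) * Complex.I)‖ ≤ 2 := by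
    calc ‖(1 : ℂ) + Complex.exp (((2 * π * a * s : ℝ) : ℂ) * Complex.I)‖
        ≤ ‖(1:ℂ)‖ + ‖Complex.exp (((2 * π * a * s : ℝ) : ℂ) * Complex.I)‖ := norm_add_le _ _
      _ = 2 := by rw [norm_exp_I]; norm_num
  have h2 : ‖(2:ℂ)‖ = 2 := by norm_num
  rw [h2]
  linarith

lemma norm_cf_one (ha : a ≠ 0) {s : ℝ} (h : ‖cf a s‖ = 1) : ∃ n : ℤ, a * s = n := by
  set w := Complex.exp (2 * π * Complex.I * a * s) with hw
  have hwi : (2 * (π:ℂ) * Complex.I * a * s) = ((2 * π * a * s : ℝ) : ℂ) * Complex.I := by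
    push_cast; ring
  have hwabs : ‖w‖ = 1 := by rw [hw, hwi]; exact norm_exp_I _
  have h1 : ‖(1:ℂ) + w‖ = 2 := by
    rw [cf, norm_div] at h
    have h2 : ‖(2:ℂ)‖ = 2 := by norm_num
    rw [h2] at h
    linarith
  have hns : Complex.normSq (1 + w) = 4 := by
    have : ‖(1:ℂ) + w‖^2 = 4 := by rw [h1]; norm_num
    rwa [Complex.sq_norm] at this
  rw [Complex.normSq_add] at hns
  have hnsw : Complex.normSq w = 1 := by
    have : ‖w‖ ^ 2 = 1 := by rw [hwabs]; norm_num
    rwa [Complex.sq_norm] at this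
  have hre : w.re = 1 := by
    have hcre : ((1:ℂ) * (starRingEnd ℂ) w).re = w.re := by
      simp [Complex.conj_re]
    rw [hcre] at hns
    simp only [Complex.normSq_one] at hns
    rw [hnsw] at hns
    linarith
  have him : w.im = 0 := by
    have := Complex.normSq_apply w
    rw [hnsw, hre] at this
    nlinarith [sq_nonneg w.im]
  have hw1 : w = 1 := by
    apply Complex.ext <;> simp [hre, him]
  obtain ⟨n, hn⟩ := Complex.exp_eq_one_iff.mp (hw ▸ hw1)
  refine ⟨n, ?_⟩
  have hπ : ((π:ℂ)) * Complex.I ≠ 0 :=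
    mul_ne_zero (Complex.ofReal_ne_zero.mpr Real.pi_ne_zero) Complex.I_ne_zero
  have h3 : (((a * s : ℝ) : ℂ) - (n : ℂ)) * (2 * ((π:ℂ) * Complex.I)) = 0 := by
    push_cast
    push_cast at hn
    linear_combination hn
  have h4 : (((a * s : ℝ) : ℂ) - (n : ℂ)) = 0 := by
    rcases mul_eq_zero.mp h3 with h4 | h4
    · exact h4
    · exact absurd h4 (mul_ne_zero two_ne_zero hπ)
  have h5 : ((a * s : ℝ) : ℂ) = (n : ℂ) := by linear_combination h4
  exact_mod_cast h5

lemma F_tendsto (hR : 3 ≤ |R|) (μ : Measure ℝ) [IsProbabilityMeasure μ] (t : ℝ) :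
    Tendsto (fun k : ℕ => F μ (t / (R:ℝ) ^ k)) atTop (nhds 1) := by
  have h3 : (3:ℝ) ≤ |(R:ℝ)| := by exact_mod_cast hR
  have habs : |((R:ℝ))⁻¹| < 1 := by
    rw [abs_inv]
    rw [inv_lt_one_iff₀]
    right; linarith
  have hlim : Tendsto (fun k : ℕ => t / (R:ℝ) ^ k) atTop (nhds 0) := by
    have := (tendsto_pow_atTop_nhds_zero_of_abs_lt_one habs).const_mul t
    rw [mul_zero] at this
    refine this.congr fun k => ?_
    rw [div_eq_mul_inv, ← inv_pow]
  have h1 : (1:ℂ) = F μ 0 := (F_zero μ).symm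
  rw [h1]
  refine tendsto_integral_of_dominated_convergence (fun _ => (1:ℝ))
    (fun k => (E_cont_x _).aestronglyMeasurable) (integrable_const 1)
    (fun k => ae_of_all _ fun x => by rw [E_norm]) (ae_of_all _ fun x => ?_)
  exact ((E_cont_t x).tendsto 0).comp hlim

lemma F_zero_struct (hodd : Odd R) (hR : 3 ≤ |R|) (ha : a ≠ 0)
    (μ : Measure ℝ) [IsProbabilityMeasure μ]
    (hμ : μ = (1/2 : ℝ≥0∞) • (μ.map (fun x => x / (R : ℝ)) +
      μ.map (fun x => x / (R : ℝ) + a)))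
    {t : ℝ} (h0 : F μ t = 0) :
    ∃ (k : ℕ) (m : ℤ), Odd m ∧ 2 * a * t = (R:ℝ) ^ k * m := by
  have hRz : (R : ℝ) ≠ 0 := by
    simp only [ne_eq, Int.cast_eq_zero]
    intro h; rw [h] at hR; norm_num at hR
  by_contra hno
  push_neg at hno
  have claim : ∀ k : ℕ, F μ (t / (R:ℝ) ^ k) = 0 := by
    intro k
    induction k with
    | zero => simpa using h0
    | succ k ih =>
      have heq := F_self hR μ hμ (t / (R:ℝ) ^ k)
      have hdd : t / (R:ℝ) ^ k / (R:ℝ) = t / (R:ℝ) ^ (k+1) := by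
        rw [div_div, ← pow_succ]
      rw [hdd, ih] at heq
      have hc : cf a (t / (R:ℝ) ^ k) ≠ 0 := by
        intro hc0
        obtain ⟨m, hm, he⟩ := cf_zero_imp ha hc0
        refine hno k m hm ?_
        field_simp at he
        linarith
      exact ((mul_eq_zero.mp heq.symm).resolve_left hc)
  have htend := F_tendsto hR μ t
  have h01 : (0:ℂ) = 1 :=
    tendsto_nhds_unique (tendsto_const_nhds.congr fun k => (claim k).symm) htend
  norm_num at h01

lemma norm_F_one (hodd : Odd R) (hR : 3 ≤ |R|) (ha : a ≠ 0)
    (μ : Measure ℝ) [IsProbabilityMeasure μ]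
    (hμ : μ = (1/2 : ℝ≥0∞) • (μ.map (fun x => x / (R : ℝ)) +
      μ.map (fun x => x / (R : ℝ) + a)))
    {t : ℝ} (h1 : ‖F μ t‖ = 1) : t = 0 := by
  have hRz : (R : ℝ) ≠ 0 := by
    simp only [ne_eq, Int.cast_eq_zero]
    intro h; rw [h] at hR; norm_num at hR
  have step : ∀ s : ℝ, ‖F μ s‖ = 1 → ‖F μ (s / R)‖ = 1 ∧ ∃ n : ℤ, a * s = n := by
    intro s hs
    have heq := F_self hR μ hμ s
    have hmul : ‖cf a s‖ * ‖F μ (s / R)‖ = 1 := by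
      rw [← norm_mul, ← heq]; exact hs
    have hcle := norm_cf_le a s
    have hFle := norm_F_le μ (s / R)
    have hc0 : (0:ℝ) ≤ ‖cf a s‖ := norm_nonneg _
    have hF0 : (0:ℝ) ≤ ‖F μ (s / R)‖ := norm_nonneg _
    have hc1 : ‖cf a s‖ = 1 := by nlinarith
    have hF1 : ‖F μ (s / R)‖ = 1 := by nlinarith
    exact ⟨hF1, norm_cf_one ha hc1⟩
  have claim : ∀ k : ℕ, ‖F μ (t / (R:ℝ) ^ k)‖ = 1 := by
    intro k
    induction k with
    | zero => simpa using h1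
    | succ k ih =>
      have := (step _ ih).1
      rwa [div_div, ← pow_succ] at this
  by_contra ht
  have hat : a * t ≠ 0 := mul_ne_zero ha ht
  have h3 : (3:ℝ) ≤ |(R:ℝ)| := by exact_mod_cast hR
  obtain ⟨k, hk⟩ := pow_unbounded_of_one_lt |a * t| (show (1:ℝ) < |(R:ℝ)| by linarith)
  obtain ⟨n, hn⟩ := (step _ (claim k)).2
  have hn' : a * t = (R:ℝ) ^ k * n := by
    field_simp at hn
    linarith
  have hn0 : n ≠ 0 := by
    intro h0
    rw [h0] at hn'
    simp only [Int.cast_zero, mul_zero] at hn'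
    exact hat hn'
  have hone : (1:ℝ) ≤ |(n:ℝ)| := by
    have := Int.one_le_abs hn0
    exact_mod_cast this
  have habs : |a * t| = |(R:ℝ)| ^ k * |(n:ℝ)| := by
    rw [hn', abs_mul, abs_pow]
  have hpos : (0:ℝ) < |(R:ℝ)| ^ k := by positivity
  nlinarith

lemma F_odd_zero (hR : 3 ≤ |R|) (ha : a ≠ 0)
    (μ : Measure ℝ) [IsProbabilityMeasure μ]
    (hμ : μ = (1/2 : ℝ≥0∞) • (μ.map (fun x => x / (R : ℝ)) +
      μ.map (fun x => x / (R : ℝ) + a)))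
    {s : ℝ} {m : ℤ} (hm : Odd m) (h : 2 * a * s = m) : F μ s = 0 := by
  rw [F_self hR μ hμ s, cf_eq_zero ha hm h, zero_mul]

lemma E_ne_ae_zero (μ : Measure ℝ) [IsProbabilityMeasure μ] (t : ℝ) :
    ¬ (E t =ᵐ[μ] 0) := by
  intro h
  obtain ⟨x, hx⟩ := h.exists
  exact Complex.exp_ne_zero _ hx

lemma E_memℒp (μ : Measure ℝ) [IsProbabilityMeasure μ] (t : ℝ) : MemLp (E t) 2 μ :=
  MemLp.of_bound (E_cont_x t).aestronglyMeasurable 1 (ae_of_all _ fun x => by rw [E_norm])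

/-- The two-point Parseval contradiction step. -/
lemma two_point (hodd : Odd R) (hR : 3 ≤ |R|) (ha : a ≠ 0)
    (μ : Measure ℝ) [IsProbabilityMeasure μ]
    (hμ : μ = (1/2 : ℝ≥0∞) • (μ.map (fun x => x / (R : ℝ)) +
      μ.map (fun x => x / (R : ℝ) + a)))
    (Λ : Set ℝ)
    (hcomp : ∀ g : Lp ℂ 2 μ,
      (∀ lam ∈ Λ, ∫ x, (starRingEnd ℂ) (E lam x) * (g : ℝ → ℂ) x ∂μ = 0) → g = 0)
    (l1 l2 : ℝ) (hl1 : l1 ∈ Λ) (hl2 : l2 ∈ Λ) (hne : l1 ≠ l2)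
    (hsub : ∀ l ∈ Λ, l = l1 ∨ l = l2)
    (hF21 : F μ (l2 - l1) = 0) :
    l1 + 1 / (2 * a) - l2 = 0 := by
  set ξ := l1 + 1 / (2 * a) with hξ
  set c2 := F μ (ξ - l2) with hc2
  set h := fun x => E ξ x - c2 * E l2 x with hh
  have haesm : AEStronglyMeasurable h μ :=
    ((E_cont_x ξ).sub (continuous_const.mul (E_cont_x l2))).aestronglyMeasurable
  have memh : MemLp h 2 μ := by
    refine MemLp.of_bound haesm (1 + ‖c2‖) (ae_of_all _ fun x => ?_)
    calc ‖E ξ x - c2 * E l2 x‖ ≤ ‖E ξ x‖ + ‖c2 * E l2 x‖ := norm_sub_le _ _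
      _ = 1 + ‖c2‖ := by rw [norm_mul, E_norm, E_norm, mul_one]
  have hEi : ∀ s : ℝ, Integrable (fun x => E s x) μ := fun s => E_int μ s
  have key : ∀ s : ℝ, ∫ x, (starRingEnd ℂ) (E s x) * h x ∂μ
      = F μ (ξ - s) - c2 * F μ (l2 - s) := by
    intro s
    have hpt : ∀ x : ℝ, (starRingEnd ℂ) (E s x) * h x
        = E (ξ - s) x - c2 * E (l2 - s) x := by
      intro x
      calc (starRingEnd ℂ) (E s x) * (E ξ x - c2 * E l2 x)
          = ((starRingEnd ℂ) (E s x) * E ξ x)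
            - c2 * ((starRingEnd ℂ) (E s x) * E l2 x) := by ring
        _ = E (ξ - s) x - c2 * E (l2 - s) x := by rw [E_mul_conj, E_mul_conj]
    simp_rw [hpt]
    rw [integral_sub (hEi (ξ - s)) ((hEi (l2 - s)).const_mul c2), integral_const_mul]
    rfl
  have hF11 : F μ (ξ - l1) = 0 := by
    have hval : ξ - l1 = 1 / (2 * a) := by rw [hξ]; ring
    rw [hval]
    refine F_odd_zero hR ha μ hμ (m := 1) ⟨0, by ring⟩ ?_
    push_cast
    field_simp
  have hg0 : memh.toLp h = 0 := by
    refine hcomp _ ?_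
    intro lam hlam
    have hcoe : (memh.toLp h : ℝ → ℂ) =ᵐ[μ] h := memh.coeFn_toLp
    have heq : ∫ x, (starRingEnd ℂ) (E lam x) * (memh.toLp h : ℝ → ℂ) x ∂μ
        = ∫ x, (starRingEnd ℂ) (E lam x) * h x ∂μ :=
      integral_congr_ae (hcoe.mono fun x hx => by simp only [hx])
    rw [heq, key lam]
    rcases hsub lam hlam with rfl | rfl
    · rw [hF11, hF21]; ring
    · rw [sub_self, F_zero, ← hc2]; ring
  have hae : h =ᵐ[μ] 0 := by
    have h1 := memh.coeFn_toLp
    rw [hg0] at h1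
    exact h1.symm.trans (Lp.coeFn_zero ℂ 2 μ)
  have hzero : ∫ x, (starRingEnd ℂ) (E ξ x) * h x ∂μ = 0 := by
    have heq0 : ∫ x, (starRingEnd ℂ) (E ξ x) * h x ∂μ = ∫ _x, (0:ℂ) ∂μ :=
      integral_congr_ae (hae.mono fun x hx => by simp only [hx, Pi.zero_apply, mul_zero])
    rw [heq0, integral_zero]
  rw [key ξ, sub_self, F_zero] at hzero
  have hFl2 : F μ (l2 - ξ) = (starRingEnd ℂ) c2 := by
    rw [show l2 - ξ = -(ξ - l2) by ring, F_neg, hc2]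
  rw [hFl2] at hzero
  have hns : (Complex.normSq c2 : ℂ) = 1 := by
    rw [← Complex.mul_conj]; linear_combination -hzero
  have hns' : Complex.normSq c2 = 1 := by exact_mod_cast hns
  have hnorm : ‖c2‖ = 1 := by
    have h2 : ‖c2‖ ^ 2 = 1 := by rw [Complex.sq_norm]; exact hns'
    nlinarith [norm_nonneg c2]
  have hfin := norm_F_one hodd hR ha μ hμ (hc2 ▸ hnorm)
  exact hfin

/-- For odd `R` with `|R| ≥ 3` and any `a ≠ 0`, the self-similar measure of the IFS
`{x/R, x/R + a}` with equal weights admits no orthonormal basis of exponentials. -/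
theorem no_exponential_basis_odd_scale
    (R : ℤ) (hodd : Odd R) (hR : 3 ≤ |R|) (a : ℝ) (ha : a ≠ 0)
    (μ : Measure ℝ) (hP : IsProbabilityMeasure μ)
    (hμ : μ = (1/2 : ℝ≥0∞) • (μ.map (fun x => x / (R : ℝ)) +
      μ.map (fun x => x / (R : ℝ) + a))) :
    ¬ ∃ Λ : Set ℝ, IsExpONB μ Λ := by
  rintro ⟨Λ, horth, hcomp⟩
  have horth' : ∀ lam ∈ Λ, ∀ lam' ∈ Λ,
      ∫ x, (starRingEnd ℂ) (E lam x) * E lam' x ∂μ = if lam = lam' then 1 else 0 := horth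
  have hcomp' : ∀ g : Lp ℂ 2 μ,
      (∀ lam ∈ Λ, ∫ x, (starRingEnd ℂ) (E lam x) * (g : ℝ → ℂ) x ∂μ = 0) → g = 0 := hcomp
  have orthF : ∀ l ∈ Λ, ∀ l' ∈ Λ, l ≠ l' → F μ (l' - l) = 0 := by
    intro l hl l' hl' hne
    have h := horth' l hl l' hl'
    rw [if_neg hne] at h
    rw [F, ← h]
    exact integral_congr_ae
      (Filter.EventuallyEq.of_eq (funext fun x => (E_mul_conj l l' x).symm))
  by_cases htwo : ∃ l1 ∈ Λ, ∃ l2 ∈ Λ, l1 ≠ l2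
  · obtain ⟨l1, hl1, l2, hl2, hne⟩ := htwo
    have hsub : ∀ l ∈ Λ, l = l1 ∨ l = l2 := by
      intro l hl
      by_contra hcon
      push_neg at hcon
      obtain ⟨hne1, hne2⟩ := hcon
      obtain ⟨k1, m1, o1, e1⟩ := F_zero_struct hodd hR ha μ hμ (orthF l1 hl1 l2 hl2 hne)
      obtain ⟨k2, m2, o2, e2⟩ := F_zero_struct hodd hR ha μ hμ (orthF l2 hl2 l hl (Ne.symm hne2))
      obtain ⟨k3, m3, o3, e3⟩ := F_zero_struct hodd hR ha μ hμ (orthF l1 hl1 l hl (Ne.symm hne1))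
      have hsum : ((R ^ k1 * m1 + R ^ k2 * m2 : ℤ) : ℝ) = ((R ^ k3 * m3 : ℤ) : ℝ) := by
        push_cast
        linear_combination e3 - e1 - e2
      have hz : (R ^ k1 * m1 + R ^ k2 * m2 : ℤ) = R ^ k3 * m3 := by exact_mod_cast hsum
      have heven : Even (R ^ k1 * m1 + R ^ k2 * m2) :=
        Odd.add_odd ((hodd.pow).mul o1) ((hodd.pow).mul o2)
      rw [hz] at heven
      exact (Int.not_odd_iff_even.mpr heven) ((hodd.pow).mul o3)
    have k12 := two_point hodd hR ha μ hμ Λ hcomp' l1 l2 hl1 hl2 hne hsub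
      (orthF l1 hl1 l2 hl2 hne)
    have k21 := two_point hodd hR ha μ hμ Λ hcomp' l2 l1 hl2 hl1 hne.symm
      (fun l hl => (hsub l hl).symm) (orthF l2 hl2 l1 hl1 hne.symm)
    have h0 : 1 / (2 * a) = 0 := by linarith
    rw [_root_.div_eq_zero_iff] at h0
    rcases h0 with h0 | h0
    · norm_num at h0
    · exact ha (by linarith)
  · push_neg at htwo
    by_cases hone : ∃ l1, l1 ∈ Λ
    · obtain ⟨l1, hl1⟩ := hone
      set ξ := l1 + 1 / (2 * a) with hξ
      have hmem := E_memℒp μ ξ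
      have hg0 : hmem.toLp (E ξ) = 0 := by
        refine hcomp' _ ?_
        intro lam hlam
        have hl : lam = l1 := htwo lam hlam l1 hl1
        have hcoe : (hmem.toLp (E ξ) : ℝ → ℂ) =ᵐ[μ] E ξ := hmem.coeFn_toLp
        have heq : ∫ x, (starRingEnd ℂ) (E lam x) * (hmem.toLp (E ξ) : ℝ → ℂ) x ∂μ
            = ∫ x, (starRingEnd ℂ) (E lam x) * E ξ x ∂μ :=
          integral_congr_ae (hcoe.mono fun x hx => by simp only [hx])
        rw [heq]
        have hFr : ∫ x, (starRingEnd ℂ) (E lam x) * E ξ x ∂μ = F μ (ξ - lam) :=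
          integral_congr_ae (Filter.EventuallyEq.of_eq (funext fun x => E_mul_conj lam ξ x))
        rw [hFr]
        have hval : ξ - lam = 1 / (2 * a) := by rw [hξ, hl]; ring
        rw [hval]
        refine F_odd_zero hR ha μ hμ (m := 1) ⟨0, by ring⟩ ?_
        push_cast
        field_simp
      have hae : E ξ =ᵐ[μ] 0 := by
        have h1 := hmem.coeFn_toLp
        rw [hg0] at h1
        exact h1.symm.trans (Lp.coeFn_zero ℂ 2 μ)
      exact E_ne_ae_zero μ ξ hae
    · push_neg at hone
      have hmem := E_memℒp μ 0
      have hg0 : hmem.toLp (E 0) = 0 := hcomp' _ (fun lam hlam => absurd hlam (hone lam))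
      have hae : E 0 =ᵐ[μ] 0 := by
        have h1 := hmem.coeFn_toLp
        rw [hg0] at h1
        exact h1.symm.trans (Lp.coeFn_zero ℂ 2 μ)
      exact E_ne_ae_zero μ 0 hae

end
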